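/- Let V⁺ ⊆ ℝ³ be the cone generated by {(x, y, 1) : (x−1)² + y² ≤ 1, y ≥ 0} together with the origin. Then V⁺ is a closed convex cone, the element (1,1,2) is an order unit for the induced order on ℝ³ (viewing ℝ³ as the self-adjoint part of ℂ³), and the projection P(x,y,z) = (x,y) maps V⁺ onto a set whose closure is the positive quadrant {(x,y) : x ≥ 0, y ≥ 0}, but P(V⁺) does not contain the point (0,1) (equivalently, the fiber of (0, 1) under P does not intersect V⁺). -/

import Mathlib

/-- The half-disk `{(x, y, 1) : (x−1)² + y² ≤ 1, y ≥ 0}` at height 1 in `ℝ³`. -/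
def halfDisk : Set (ℝ × ℝ × ℝ) :=
  {p | (p.1 - 1) ^ 2 + p.2.1 ^ 2 ≤ 1 ∧ 0 ≤ p.2.1 ∧ p.2.2 = 1}

/-- The cone `V⁺ ⊆ ℝ³` generated by the half-disk and the origin. -/
def Vplus : Set (ℝ × ℝ × ℝ) :=
  {p | ∃ lam : ℝ, 0 ≤ lam ∧ ∃ s ∈ halfDisk, p = lam • s}

/-- `V⁺` is a closed convex cone, `(1,1,2)` is an order unit
(it lies in the interior of `V⁺`, and every element of `ℝ³` is dominated by a positive
multiple of it), the closure of the image of `V⁺` under the projection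
`P(x,y,z) = (x,y)` is the positive quadrant, but `(0,1)` is not in the image of `V⁺`. -/
lemma Vplus_eq : Vplus = {p : ℝ × ℝ × ℝ |
    0 ≤ p.2.1 ∧ 0 ≤ p.2.2 ∧ p.1 ^ 2 + p.2.1 ^ 2 ≤ 2 * p.1 * p.2.2} := by
  ext ⟨a, b, c⟩
  constructor
  · rintro ⟨lam, hlam, ⟨x, y, z⟩, ⟨hd, hy, hz⟩, heq⟩
    simp only at hd hy hz
    subst hz
    simp only [Prod.smul_def, smul_eq_mul, Prod.mk.injEq, mul_one] at heq
    obtain ⟨ha, hb, hc⟩ := heq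
    subst ha; subst hb; subst hc
    refine ⟨mul_nonneg hlam hy, hlam, ?_⟩
    simp only [Set.mem_setOf_eq]
    nlinarith [mul_le_mul_of_nonneg_left hd (sq_nonneg c)]
  · rintro ⟨hb, hc, hineq⟩
    simp only at hb hc hineq
    rcases eq_or_lt_of_le hc with hc0 | hc0
    · have ha : a = 0 := by nlinarith
      have hb0 : b = 0 := by nlinarith
      exact ⟨0, le_refl 0, (1, 0, 1), ⟨by norm_num [halfDisk],
        by simp [ha, hb0, ← hc0, Prod.ext_iff]⟩⟩
    · refine ⟨c, le_of_lt hc0, (a / c, b / c, 1), ⟨?_, by positivity, rfl⟩, ?_⟩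
      · show (a / c - 1) ^ 2 + (b / c) ^ 2 ≤ 1
        rw [div_sub_one (ne_of_gt hc0), div_pow, div_pow, ← add_div,
          div_le_one (by positivity)]
        nlinarith
      · have h1 : c * (a / c) = a := by field_simp
        have h2 : c * (b / c) = b := by field_simp
        simp [Prod.ext_iff, h1, h2]

lemma Vplus_mem_iff (p : ℝ × ℝ × ℝ) :
    p ∈ Vplus ↔ 0 ≤ p.2.1 ∧ 0 ≤ p.2.2 ∧ p.1 ^ 2 + p.2.1 ^ 2 ≤ 2 * p.1 * p.2.2 := by
  rw [Vplus_eq]; rfl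

lemma Vplus_smul : ∀ (c : ℝ), 0 ≤ c → ∀ p ∈ Vplus, c • p ∈ Vplus := by
  rintro t ht ⟨a, b, c⟩ hp
  rw [Vplus_mem_iff] at hp ⊢
  obtain ⟨h1, h2, h3⟩ := hp
  simp only [Prod.smul_def, smul_eq_mul] at *
  refine ⟨by positivity, by positivity, ?_⟩
  nlinarith [mul_le_mul_of_nonneg_left h3 (sq_nonneg t)]

lemma Vplus_add : ∀ p ∈ Vplus, ∀ q ∈ Vplus, p + q ∈ Vplus := by
  rintro ⟨a, b, c⟩ hp ⟨a', b', c'⟩ hq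
  rw [Vplus_mem_iff] at hp hq ⊢
  obtain ⟨h1, h2, h3⟩ := hp
  obtain ⟨h1', h2', h3'⟩ := hq
  simp only [Prod.fst_add, Prod.snd_add] at *
  refine ⟨by linarith, by linarith, ?_⟩
  -- Cauchy-Schwarz style: (c-a)(c'-a') ≥ ... need (a+a')²+(b+b')² ≤ 2(a+a')(c+c')
  have key : ((c - a) * (c' - a') + b * b') ^ 2 ≤
      (((c - a) ^ 2 + b ^ 2) * ((c' - a') ^ 2 + b' ^ 2)) := by
    nlinarith [sq_nonneg ((c - a) * b' - (c' - a') * b)]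
  have e1 : (c - a) ^ 2 + b ^ 2 ≤ c ^ 2 := by nlinarith
  have e2 : (c' - a') ^ 2 + b' ^ 2 ≤ c' ^ 2 := by nlinarith
  have e3 : ((c - a) * (c' - a') + b * b') ^ 2 ≤ (c * c') ^ 2 := by
    calc ((c - a) * (c' - a') + b * b') ^ 2
        ≤ ((c - a) ^ 2 + b ^ 2) * ((c' - a') ^ 2 + b' ^ 2) := key
      _ ≤ c ^ 2 * c' ^ 2 := by
          apply mul_le_mul e1 e2 (by positivity) (sq_nonneg c)
      _ = (c * c') ^ 2 := by ring
  have e4 : (c - a) * (c' - a') + b * b' ≤ c * c' := by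
    have hcc : 0 ≤ c * c' := mul_nonneg h2 h2'
    nlinarith [abs_le_of_sq_le_sq' e3 hcc]
  nlinarith

lemma Vplus_closed : IsClosed Vplus := by
  rw [Vplus_eq]
  have h1 : IsClosed {p : ℝ × ℝ × ℝ | 0 ≤ p.2.1} :=
    isClosed_le continuous_const (continuous_fst.comp continuous_snd)
  have h2 : IsClosed {p : ℝ × ℝ × ℝ | 0 ≤ p.2.2} :=
    isClosed_le continuous_const (continuous_snd.comp continuous_snd)
  have h3 : IsClosed {p : ℝ × ℝ × ℝ | p.1 ^ 2 + p.2.1 ^ 2 ≤ 2 * p.1 * p.2.2} :=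
    isClosed_le (by fun_prop) (by fun_prop)
  exact h1.inter (h2.inter h3)

lemma Vplus_interior : ((1, 1, 2) : ℝ × ℝ × ℝ) ∈ interior Vplus := by
  rw [mem_interior]
  refine ⟨{p : ℝ × ℝ × ℝ | 0 < p.2.1 ∧ 0 < p.2.2 ∧ p.1 ^ 2 + p.2.1 ^ 2 < 2 * p.1 * p.2.2},
    ?_, ?_, ?_⟩
  · intro p hp
    rw [Vplus_mem_iff]
    exact ⟨le_of_lt hp.1, le_of_lt hp.2.1, le_of_lt hp.2.2⟩
  · have o1 : IsOpen {p : ℝ × ℝ × ℝ | 0 < p.2.1} :=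
      isOpen_lt continuous_const (continuous_fst.comp continuous_snd)
    have o2 : IsOpen {p : ℝ × ℝ × ℝ | 0 < p.2.2} :=
      isOpen_lt continuous_const (continuous_snd.comp continuous_snd)
    have o3 : IsOpen {p : ℝ × ℝ × ℝ | p.1 ^ 2 + p.2.1 ^ 2 < 2 * p.1 * p.2.2} :=
      isOpen_lt (by fun_prop) (by fun_prop)
    exact (o1.inter (o2.inter o3))
  · norm_num

lemma Vplus_order_unit (v : ℝ × ℝ × ℝ) :
    ∃ r : ℝ, 0 < r ∧ r • ((1, 1, 2) : ℝ × ℝ × ℝ) - v ∈ Vplus := by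
  obtain ⟨x, y, z⟩ := v
  set r : ℝ := 1 + |x| + |y| + |z| + (x ^ 2 + y ^ 2 + z ^ 2) with hr
  have hrpos : 0 < r := by positivity
  refine ⟨r, hrpos, ?_⟩
  rw [Vplus_mem_iff]
  have hx := abs_nonneg x; have hy := abs_nonneg y; have hz := abs_nonneg z
  have hx1 := le_abs_self x; have hy1 := le_abs_self y; have hz1 := le_abs_self z
  have hx2 := neg_abs_le x; have hy2 := neg_abs_le y; have hz2 := neg_abs_le z
  have hsq := sq_nonneg x; have hsqy := sq_nonneg y; have hsqz := sq_nonneg z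
  simp only [Prod.smul_def, smul_eq_mul, Prod.fst_sub, Prod.snd_sub, mul_one]
  refine ⟨by nlinarith, by nlinarith, ?_⟩
  have hr1 : 1 ≤ r := by nlinarith
  have hxz : 2 * |x| * |z| ≤ x ^ 2 + z ^ 2 := by nlinarith [sq_nonneg (|x| - |z|), sq_abs x, sq_abs z]
  have habs : |x * z| = |x| * |z| := abs_mul x z
  have h2xz : - (2 * x * z) ≤ x ^ 2 + z ^ 2 := by nlinarith [sq_nonneg (x + z)]
  nlinarith [mul_le_mul_of_nonneg_left hx1 (le_of_lt hrpos),
    mul_le_mul_of_nonneg_left hz1 (le_of_lt hrpos),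
    mul_le_mul_of_nonneg_left hy2 (le_of_lt hrpos),
    mul_pos hrpos hrpos, sq_nonneg (x - y), sq_nonneg (x + z)]

lemma Vplus_image_mem {u v : ℝ} (hu : 0 < u) (hv : 0 ≤ v) :
    (u, v) ∈ (fun p : ℝ × ℝ × ℝ => (p.1, p.2.1)) '' Vplus := by
  refine ⟨(u, v, (u ^ 2 + v ^ 2) / (2 * u)), ?_, rfl⟩
  rw [Vplus_mem_iff]
  refine ⟨hv, by positivity, ?_⟩
  simp only
  have h : 2 * u * ((u ^ 2 + v ^ 2) / (2 * u)) = u ^ 2 + v ^ 2 := by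
    field_simp
  rw [h]

open Filter Topology in
lemma Vplus_closure :
    closure ((fun p : ℝ × ℝ × ℝ => (p.1, p.2.1)) '' Vplus) =
      {q : ℝ × ℝ | 0 ≤ q.1 ∧ 0 ≤ q.2} := by
  apply Set.Subset.antisymm
  · apply closure_minimal
    · rintro ⟨u, v⟩ ⟨⟨a, b, c⟩, hp, heq⟩
      rw [Vplus_mem_iff] at hp
      obtain ⟨h1, h2, h3⟩ := hp
      simp only [Prod.mk.injEq] at heq h1 h2 h3
      obtain ⟨hu, hv⟩ := heq
      subst hu; subst hv
      refine ⟨?_, h1⟩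
      simp only [Set.mem_setOf_eq]
      nlinarith [mul_nonneg h1 h2, sq_nonneg b]
    · exact (isClosed_le continuous_const continuous_fst).inter
        (isClosed_le continuous_const continuous_snd)
  · rintro ⟨u, v⟩ ⟨hu, hv⟩
    simp only [Set.mem_setOf_eq] at hu hv
    rw [mem_closure_iff_seq_limit]
    refine ⟨fun n => (u + 1 / (n + 1), v),
      fun n => Vplus_image_mem (add_pos_of_nonneg_of_pos hu (by positivity)) hv, ?_⟩
    have h1 : Tendsto (fun n : ℕ => u + 1 / ((n : ℝ) + 1)) atTop (𝓝 u) := by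
      simpa using tendsto_const_nhds.add (tendsto_one_div_add_atTop_nhds_zero_nat (𝕜 := ℝ))
    exact h1.prodMk_nhds tendsto_const_nhds

lemma Vplus_not_image :
    ((0, 1) : ℝ × ℝ) ∉ (fun p : ℝ × ℝ × ℝ => (p.1, p.2.1)) '' Vplus := by
  rintro ⟨⟨a, b, c⟩, hp, heq⟩
  rw [Vplus_mem_iff] at hp
  obtain ⟨h1, h2, h3⟩ := hp
  simp only [Prod.mk.injEq] at heq h3
  obtain ⟨ha, hb⟩ := heq
  subst ha; subst hb
  nlinarith

theorem cone_Vplus_properties :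
    IsClosed Vplus ∧ Convex ℝ Vplus ∧
    (∀ (c : ℝ), 0 ≤ c → ∀ p ∈ Vplus, c • p ∈ Vplus) ∧
    (∀ p ∈ Vplus, ∀ q ∈ Vplus, p + q ∈ Vplus) ∧
    ((1, 1, 2) : ℝ × ℝ × ℝ) ∈ interior Vplus ∧
    (∀ v : ℝ × ℝ × ℝ, ∃ r : ℝ, 0 < r ∧ r • ((1, 1, 2) : ℝ × ℝ × ℝ) - v ∈ Vplus) ∧
    closure ((fun p : ℝ × ℝ × ℝ => (p.1, p.2.1)) '' Vplus) =
      {q : ℝ × ℝ | 0 ≤ q.1 ∧ 0 ≤ q.2} ∧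
    ((0, 1) : ℝ × ℝ) ∉ (fun p : ℝ × ℝ × ℝ => (p.1, p.2.1)) '' Vplus := by
  refine ⟨Vplus_closed, ?_, Vplus_smul, Vplus_add, Vplus_interior, Vplus_order_unit,
    Vplus_closure, Vplus_not_image⟩
  intro p hp q hq s t hs ht hst
  exact Vplus_add _ (Vplus_smul s hs p hp) _ (Vplus_smul t ht q hq)
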